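/- Let ψ : ℝ → ℝ be a bounded measurable function with compact support, ∫ ψ = 0 and ∫ ψ² = 1. Let B ⊂ ℝ be a compact set of positive Lebesgue measure, c₀ = |B|^{−1}, and A ⊆ B × B. Let j₁, j₂ be nonnegative integers and R a finite subset of ℤ² such that the functions ψ_{JK}(x,y) = 2^{(j₁+j₂)/2} ψ(2^{j₁}x − k₁) ψ(2^{j₂}y − k₂), K = (k₁,k₂) ∈ R, have pairwise disjoint supports, all contained in A. For n ≥ 1 and ε ∈ {−1,1}^R define π_ε(x,y) = c₀ 1_B(y) + n^{−1/2} Σ_{K∈R} ε_K ψ_{JK}(x,y). If (2^{j₁+j₂}/n)^{1/2} ≤ c₀/(2‖ψ‖_∞²), then: (i) ∫_ℝ π_ε(x,y) dy = 1 for every x ∈ ℝ; (ii) π_ε(x,y) ≥ (c₀/2) 1_B(y) ≥ 0 for all x, y; (iii) ∫_ℝ c₀ 1_B(x) π_ε(x,y) dx = c₀ 1_B(y) for every y ∈ ℝ. -/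

import Mathlib

open MeasureTheory

/-- Composition with an affine map is integrable. -/
lemma aux_integrable_comp (ψ : ℝ → ℝ) (hψ : Integrable ψ) {a : ℝ} (ha : a ≠ 0) (k : ℝ) :
    Integrable (fun x => ψ (a * x - k)) :=
  (hψ.comp_sub_right k).comp_mul_left' ha

/-- Integral of a zero-mean function composed with an affine map vanishes. -/
lemma aux_integral_comp (ψ : ℝ → ℝ) (h0 : ∫ x, ψ x = 0) (a : ℝ) (k : ℝ) :
    ∫ x, ψ (a * x - k) = 0 := by
  have h1 : ∫ t, ψ (t - k) = 0 := by rw [integral_sub_right_eq_self ψ k, h0]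
  have h2 : ∫ x, ψ (a * x - k) = |a⁻¹| • ∫ t, ψ (t - k) :=
    MeasureTheory.Measure.integral_comp_mul_left (fun t => ψ (t - k)) a
  rw [h2, h1, smul_zero]

/-- construction of perturbed transition densities in the lower-bound
proof.  Under the smallness condition `√(2^{j₁+j₂}/n) ≤ c₀/(2‖ψ‖_∞²)`, each perturbed
function `π_ε(x,y) = c₀1_B(y) + n^{−1/2} Σ_K ε_K ψ_{JK}(x,y)` is a transition density
bounded below by `(c₀/2)1_B(y)`, with stationary density `c₀1_B`. -/
theorem perturbed_transition_density_properties
    (ψ : ℝ → ℝ) (hψ_meas : Measurable ψ) (hψ_supp : HasCompactSupport ψ)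
    (M : ℝ) (hM : ∀ x, |ψ x| ≤ M)
    (hψ_int : ∫ x, ψ x = 0) (hψ_sq : ∫ x, ψ x ^ 2 = 1)
    (B : Set ℝ) (hB_cpt : IsCompact B) (hB_pos : 0 < (volume B).toReal)
    (c₀ : ℝ) (hc₀ : c₀ = ((volume B).toReal)⁻¹)
    (A : Set (ℝ × ℝ)) (hAB : A ⊆ B ×ˢ B)
    (j₁ j₂ : ℕ) (R : Finset (ℤ × ℤ))
    (ψJ : ℤ × ℤ → ℝ × ℝ → ℝ)
    (hψJ : ∀ k : ℤ × ℤ, ψJ k = fun p =>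
      (2 : ℝ) ^ (((j₁ : ℝ) + (j₂ : ℝ)) / 2)
        * ψ ((2 : ℝ) ^ j₁ * p.1 - (k.1 : ℝ)) * ψ ((2 : ℝ) ^ j₂ * p.2 - (k.2 : ℝ)))
    (hsupp : ∀ k ∈ R, Function.support (ψJ k) ⊆ A)
    (hdisj : ∀ k ∈ R, ∀ k' ∈ R, k ≠ k' →
      Disjoint (Function.support (ψJ k)) (Function.support (ψJ k')))
    (n : ℕ) (hn : 1 ≤ n)
    (ε : ℤ × ℤ → ℝ) (hε : ∀ k ∈ R, ε k = 1 ∨ ε k = -1)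
    (πe : ℝ × ℝ → ℝ)
    (hπe : πe = fun p => c₀ * B.indicator (fun _ => (1 : ℝ)) p.2
      + (n : ℝ) ^ (-(1 : ℝ) / 2) * ∑ k ∈ R, ε k * ψJ k p)
    (hcond : Real.sqrt ((2 : ℝ) ^ ((j₁ : ℝ) + (j₂ : ℝ)) / (n : ℝ)) ≤ c₀ / (2 * M ^ 2)) :
    (∀ x : ℝ, ∫ y, πe (x, y) = 1)
    ∧ (∀ x y : ℝ, c₀ / 2 * B.indicator (fun _ => (1 : ℝ)) y ≤ πe (x, y)
        ∧ 0 ≤ πe (x, y))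
    ∧ (∀ y : ℝ, ∫ x, c₀ * B.indicator (fun _ => (1 : ℝ)) x * πe (x, y)
        = c₀ * B.indicator (fun _ => (1 : ℝ)) y) := by
  have hBmeas : MeasurableSet B := hB_cpt.measurableSet
  have hc₀pos : 0 < c₀ := by rw [hc₀]; positivity
  have hc₀vol : c₀ * (volume B).toReal = 1 := by
    rw [hc₀]; exact inv_mul_cancel₀ hB_pos.ne'
  have hnpos : (0 : ℝ) < n := by exact_mod_cast hn
  -- abbreviations
  set s : ℝ := (n : ℝ) ^ (-(1 : ℝ) / 2) with hs_def
  set C : ℝ := (2 : ℝ) ^ (((j₁ : ℝ) + (j₂ : ℝ)) / 2) with hC_def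
  have hCpos : 0 < C := Real.rpow_pos_of_pos (by norm_num) _
  have hspos : 0 < s := Real.rpow_pos_of_pos hnpos _
  have hM0 : 0 ≤ M := le_trans (abs_nonneg _) (hM 0)
  -- ψ is integrable
  have hψInt : Integrable ψ := by
    refine Integrable.mono' (g := (tsupport ψ).indicator fun _ => M)
      ?_ hψ_meas.aestronglyMeasurable ?_
    · exact (integrable_indicator_iff (isClosed_tsupport ψ).measurableSet).2
        (integrableOn_const hψ_supp.measure_lt_top.ne)
    · filter_upwards with x
      by_cases hx : x ∈ tsupport ψ
      · rw [Set.indicator_of_mem hx]; simpa using hM x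
      · rw [Set.indicator_of_notMem hx, image_eq_zero_of_notMem_tsupport hx]; simp
  -- the smallness condition
  have hsC : s * C = Real.sqrt ((2 : ℝ) ^ ((j₁ : ℝ) + (j₂ : ℝ)) / (n : ℝ)) := by
    have h1 : s = (Real.sqrt (n : ℝ))⁻¹ := by
      rw [hs_def, show (-(1 : ℝ) / 2) = -(1 / 2) by ring, Real.rpow_neg hnpos.le,
        Real.sqrt_eq_rpow]
    have h2 : C = Real.sqrt ((2 : ℝ) ^ ((j₁ : ℝ) + (j₂ : ℝ))) := by
      rw [Real.sqrt_eq_rpow, ← Real.rpow_mul (by norm_num : (0 : ℝ) ≤ 2)]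
      rw [hC_def]; congr 1; ring
    rw [h1, h2, Real.sqrt_div (Real.rpow_nonneg (by norm_num) _)]
    ring
  have hkey : 0 < M → s * (C * M ^ 2) ≤ c₀ / 2 := by
    intro hMpos
    have h1 : Real.sqrt ((2 : ℝ) ^ ((j₁ : ℝ) + (j₂ : ℝ)) / (n : ℝ)) * M ^ 2
        ≤ c₀ / (2 * M ^ 2) * M ^ 2 :=
      mul_le_mul_of_nonneg_right hcond (by positivity)
    have h2 : c₀ / (2 * M ^ 2) * M ^ 2 = c₀ / 2 := by
      field_simp
    calc s * (C * M ^ 2) = s * C * M ^ 2 := by ring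
      _ = Real.sqrt ((2 : ℝ) ^ ((j₁ : ℝ) + (j₂ : ℝ)) / (n : ℝ)) * M ^ 2 := by rw [hsC]
      _ ≤ c₀ / 2 := h2 ▸ h1
  -- structure of the perturbation sum at a point
  have hsum : ∀ p : ℝ × ℝ, (∑ k ∈ R, ε k * ψJ k p) ≠ 0 →
      p ∈ A ∧ |∑ k ∈ R, ε k * ψJ k p| ≤ C * M ^ 2 ∧ 0 < M := by
    intro p hp
    obtain ⟨k₀, hk₀R, hk₀⟩ : ∃ k₀ ∈ R, ε k₀ * ψJ k₀ p ≠ 0 := by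
      by_contra h; push_neg at h; exact hp (Finset.sum_eq_zero h)
    have hψk₀ : ψJ k₀ p ≠ 0 := fun h => hk₀ (by rw [h, mul_zero])
    have hpA : p ∈ A := hsupp k₀ hk₀R hψk₀
    have hsingle : ∑ k ∈ R, ε k * ψJ k p = ε k₀ * ψJ k₀ p := by
      refine Finset.sum_eq_single_of_mem k₀ hk₀R ?_
      intro k hk hne
      have hz : ψJ k p = 0 := by
        by_contra h
        exact absurd hψk₀ (Set.disjoint_left.mp (hdisj k hk k₀ hk₀R hne) h)
      rw [hz, mul_zero]
    have hεabs : |ε k₀| = 1 := by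
      rcases hε k₀ hk₀R with h | h <;> rw [h] <;> norm_num
    have hψbound : |ψJ k₀ p| ≤ C * M ^ 2 := by
      rw [hψJ]
      simp only
      rw [abs_mul, abs_mul, abs_of_pos hCpos]
      have h1 := hM ((2 : ℝ) ^ j₁ * p.1 - (k₀.1 : ℝ))
      have h2 := hM ((2 : ℝ) ^ j₂ * p.2 - (k₀.2 : ℝ))
      have h3 := abs_nonneg (ψ ((2 : ℝ) ^ j₁ * p.1 - (k₀.1 : ℝ)))
      have h4 := abs_nonneg (ψ ((2 : ℝ) ^ j₂ * p.2 - (k₀.2 : ℝ)))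
      have h5 : |ψ ((2 : ℝ) ^ j₁ * p.1 - (k₀.1 : ℝ))|
          * |ψ ((2 : ℝ) ^ j₂ * p.2 - (k₀.2 : ℝ))| ≤ M * M :=
        mul_le_mul h1 h2 h4 hM0
      calc C * |ψ ((2 : ℝ) ^ j₁ * p.1 - (k₀.1 : ℝ))|
            * |ψ ((2 : ℝ) ^ j₂ * p.2 - (k₀.2 : ℝ))|
          = C * (|ψ ((2 : ℝ) ^ j₁ * p.1 - (k₀.1 : ℝ))|
            * |ψ ((2 : ℝ) ^ j₂ * p.2 - (k₀.2 : ℝ))|) := by ring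
        _ ≤ C * (M * M) := mul_le_mul_of_nonneg_left h5 hCpos.le
        _ = C * M ^ 2 := by ring
    have hMpos : 0 < M := by
      rw [hψJ] at hψk₀
      simp only at hψk₀
      have h1 : ψ ((2 : ℝ) ^ j₁ * p.1 - (k₀.1 : ℝ)) ≠ 0 := by
        intro h; apply hψk₀; rw [h]; ring
      have := hM ((2 : ℝ) ^ j₁ * p.1 - (k₀.1 : ℝ))
      have : 0 < |ψ ((2 : ℝ) ^ j₁ * p.1 - (k₀.1 : ℝ))| := abs_pos.mpr h1
      linarith [hM ((2 : ℝ) ^ j₁ * p.1 - (k₀.1 : ℝ))]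
    refine ⟨hpA, ?_, hMpos⟩
    rw [hsingle, abs_mul, hεabs, one_mul]
    exact hψbound
  -- integrability of the indicator
  have hindInt : Integrable (B.indicator (fun _ => (1 : ℝ))) :=
    (integrable_indicator_iff hBmeas).2
      (integrableOn_const hB_cpt.measure_lt_top.ne)
  have hindIntegral : ∫ x, B.indicator (fun _ => (1 : ℝ)) x = (volume B).toReal := by
    rw [integral_indicator_const (1 : ℝ) hBmeas, smul_eq_mul, mul_one]
    rfl
  -- integrability and integrals in the second variable
  have htermy : ∀ (x : ℝ) (k : ℤ × ℤ), Integrable (fun y => ε k * ψJ k (x, y)) := by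
    intro x k
    have h1 : Integrable (fun y => ψ ((2 : ℝ) ^ j₂ * y - (k.2 : ℝ))) :=
      aux_integrable_comp ψ hψInt (by positivity) _
    have h2 : Integrable (fun y =>
        ε k * (C * ψ ((2 : ℝ) ^ j₁ * x - (k.1 : ℝ)))
          * ψ ((2 : ℝ) ^ j₂ * y - (k.2 : ℝ))) :=
      h1.const_mul _
    have heq : (fun y => ε k * ψJ k (x, y)) = fun y =>
        ε k * (C * ψ ((2 : ℝ) ^ j₁ * x - (k.1 : ℝ)))
          * ψ ((2 : ℝ) ^ j₂ * y - (k.2 : ℝ)) := by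
      funext y; simp only [hψJ]; ring
    rw [heq]; exact h2
  have hzeroy : ∀ (x : ℝ), ∀ k ∈ R, ∫ y, ε k * ψJ k (x, y) = 0 := by
    intro x k _
    have heq : (fun y => ε k * ψJ k (x, y)) = fun y =>
        ε k * (C * ψ ((2 : ℝ) ^ j₁ * x - (k.1 : ℝ)))
          * ψ ((2 : ℝ) ^ j₂ * y - (k.2 : ℝ)) := by
      funext y; simp only [hψJ]; ring
    rw [heq, integral_const_mul, aux_integral_comp ψ hψ_int _ _, mul_zero]
  -- integrability and integrals in the first variable
  have htermx : ∀ (y : ℝ) (k : ℤ × ℤ), Integrable (fun x => ε k * ψJ k (x, y)) := by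
    intro y k
    have h1 : Integrable (fun x => ψ ((2 : ℝ) ^ j₁ * x - (k.1 : ℝ))) :=
      aux_integrable_comp ψ hψInt (by positivity) _
    have h2 : Integrable (fun x =>
        ε k * (C * ψ ((2 : ℝ) ^ j₂ * y - (k.2 : ℝ)))
          * ψ ((2 : ℝ) ^ j₁ * x - (k.1 : ℝ))) :=
      h1.const_mul _
    have heq : (fun x => ε k * ψJ k (x, y)) = fun x =>
        ε k * (C * ψ ((2 : ℝ) ^ j₂ * y - (k.2 : ℝ)))
          * ψ ((2 : ℝ) ^ j₁ * x - (k.1 : ℝ)) := by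
      funext x; simp only [hψJ]; ring
    rw [heq]; exact h2
  have hzerox : ∀ (y : ℝ), ∀ k ∈ R, ∫ x, ε k * ψJ k (x, y) = 0 := by
    intro y k _
    have heq : (fun x => ε k * ψJ k (x, y)) = fun x =>
        ε k * (C * ψ ((2 : ℝ) ^ j₂ * y - (k.2 : ℝ)))
          * ψ ((2 : ℝ) ^ j₁ * x - (k.1 : ℝ)) := by
      funext x; simp only [hψJ]; ring
    rw [heq, integral_const_mul, aux_integral_comp ψ hψ_int _ _, mul_zero]
  refine ⟨?_, ?_, ?_⟩
  · -- (i) each πe(x,·) integrates to 1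
    intro x
    have hsumInt : Integrable (fun y => ∑ k ∈ R, ε k * ψJ k (x, y)) :=
      integrable_finset_sum R (fun k _ => htermy x k)
    have heq : (fun y => πe (x, y)) = fun y =>
        c₀ * B.indicator (fun _ => (1 : ℝ)) y
          + s * ∑ k ∈ R, ε k * ψJ k (x, y) := by
      funext y; rw [hπe]
    rw [heq, integral_add (hindInt.const_mul c₀) (hsumInt.const_mul s),
      integral_const_mul, integral_const_mul, hindIntegral,
      integral_finset_sum R (fun k _ => htermy x k),
      Finset.sum_eq_zero (hzeroy x), mul_zero, add_zero, hc₀vol]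
  · -- (ii) pointwise lower bound
    intro x y
    have hI0 : 0 ≤ B.indicator (fun _ => (1 : ℝ)) y :=
      Set.indicator_nonneg (fun _ _ => zero_le_one) y
    have hπval : πe (x, y) = c₀ * B.indicator (fun _ => (1 : ℝ)) y
        + s * ∑ k ∈ R, ε k * ψJ k (x, y) := by rw [hπe]
    by_cases hS : (∑ k ∈ R, ε k * ψJ k (x, y)) = 0
    · rw [hπval, hS, mul_zero, add_zero]
      constructor
      · apply mul_le_mul_of_nonneg_right _ hI0
        linarith
      · positivity
    · obtain ⟨hpA, habs, hMpos⟩ := hsum (x, y) hS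
      have hyB : y ∈ B := (hAB hpA).2
      have hIy : B.indicator (fun _ => (1 : ℝ)) y = 1 := Set.indicator_of_mem hyB _
      have hb1 : |s * ∑ k ∈ R, ε k * ψJ k (x, y)| ≤ c₀ / 2 := by
        rw [abs_mul, abs_of_pos hspos]
        calc s * |∑ k ∈ R, ε k * ψJ k (x, y)| ≤ s * (C * M ^ 2) :=
              mul_le_mul_of_nonneg_left habs hspos.le
          _ ≤ c₀ / 2 := hkey hMpos
      have hb2 := (abs_le.mp hb1).1
      rw [hπval, hIy]
      constructor <;> linarith
  · -- (iii) stationarity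
    intro y
    have hsumInt : Integrable (fun x => ∑ k ∈ R, ε k * ψJ k (x, y)) :=
      integrable_finset_sum R (fun k _ => htermx y k)
    have hident : (fun x => c₀ * B.indicator (fun _ => (1 : ℝ)) x * πe (x, y)) =
        fun x => (c₀ * c₀ * B.indicator (fun _ => (1 : ℝ)) y)
            * B.indicator (fun _ => (1 : ℝ)) x
          + (c₀ * s) * ∑ k ∈ R, ε k * ψJ k (x, y) := by
      funext x
      have hind_mul : ∀ k ∈ R,
          B.indicator (fun _ => (1 : ℝ)) x * ψJ k (x, y) = ψJ k (x, y) := by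
        intro k hk
        by_cases h : ψJ k (x, y) = 0
        · rw [h, mul_zero]
        · have hxB : x ∈ B := (hAB (hsupp k hk h)).1
          rw [Set.indicator_of_mem hxB, one_mul]
      have hS : B.indicator (fun _ => (1 : ℝ)) x * (∑ k ∈ R, ε k * ψJ k (x, y))
          = ∑ k ∈ R, ε k * ψJ k (x, y) := by
        rw [Finset.mul_sum]
        refine Finset.sum_congr rfl fun k hk => ?_
        rw [show B.indicator (fun _ => (1 : ℝ)) x * (ε k * ψJ k (x, y))
            = ε k * (B.indicator (fun _ => (1 : ℝ)) x * ψJ k (x, y)) by ring,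
          hind_mul k hk]
      rw [hπe]
      simp only
      calc c₀ * B.indicator (fun _ => (1 : ℝ)) x
            * (c₀ * B.indicator (fun _ => (1 : ℝ)) y
              + s * ∑ k ∈ R, ε k * ψJ k (x, y))
          = (c₀ * c₀ * B.indicator (fun _ => (1 : ℝ)) y)
              * B.indicator (fun _ => (1 : ℝ)) x
            + (c₀ * s) * (B.indicator (fun _ => (1 : ℝ)) x
              * ∑ k ∈ R, ε k * ψJ k (x, y)) := by ring
        _ = _ := by rw [hS]
    rw [hident, integral_add (hindInt.const_mul _) (hsumInt.const_mul _),
      integral_const_mul, integral_const_mul, hindIntegral,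
      integral_finset_sum R (fun k _ => htermx y k),
      Finset.sum_eq_zero (hzerox y), mul_zero, add_zero]
    calc c₀ * c₀ * B.indicator (fun _ => (1 : ℝ)) y * (volume B).toReal
        = (c₀ * (volume B).toReal) * (c₀ * B.indicator (fun _ => (1 : ℝ)) y) := by ring
      _ = c₀ * B.indicator (fun _ => (1 : ℝ)) y := by rw [hc₀vol, one_mul]
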